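/- arXiv:1701.02104 — 2 statements merged into one kernel-verified Lean document; each statement's English description precedes it below -/
import Mathlib

section
/- Let K ⊆ L be a field extension. Then the ring D = K + X·L[X] (polynomials over L with constant term in K) is a TAF-domain. -/
/-- An ideal is 2-absorbing if whenever a product of three elements lies in it,
the product of some two of them lies in it. -/
def IsTwoAbsorbing {R : Type*} [CommRing R] (I : Ideal R) : Prop :=
  ∀ a b c : R, a * b * c ∈ I → a * b ∈ I ∨ a * c ∈ I ∨ b * c ∈ I

/-- A TAF-ring: every proper ideal is a finite product of proper 2-absorbing ideals. -/
def IsTAFRing (R : Type*) [CommRing R] : Prop :=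
  ∀ I : Ideal R, I ≠ ⊤ → ∃ (n : ℕ) (J : Fin n → Ideal R),
    (∀ i, J i ≠ ⊤ ∧ IsTwoAbsorbing (J i)) ∧ I = ∏ i, J i

namespace KXLX
open Polynomial

lemma prime_isTwoAbsorbing {R : Type*} [CommRing R] {P : Ideal R} (hP : P.IsPrime) :
    IsTwoAbsorbing P := by
  intro a b c h
  rcases hP.mem_or_mem h with h' | h'
  · exact Or.inl h'
  · exact Or.inr (Or.inr (P.mul_mem_left b h'))

section coeffs
variable {L : Type*} [Field L]

lemma coeff_mul_lt {f g : L[X]} {s m : ℕ} (hf : ∀ j < s, f.coeff j = 0)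
    (hg : ∀ j < m, g.coeff j = 0) {n : ℕ} (hn : n < s + m) : (f * g).coeff n = 0 := by
  rw [coeff_mul]
  apply Finset.sum_eq_zero
  rintro ⟨i, k⟩ hik
  rw [Finset.HasAntidiagonal.mem_antidiagonal] at hik
  rcases lt_or_ge i s with hi | hi
  · rw [hf i hi, zero_mul]
  · rw [hg k (by omega), mul_zero]

lemma coeff_mul_top {f g : L[X]} {s m : ℕ} (hf : ∀ j < s, f.coeff j = 0)
    (hg : ∀ j < m, g.coeff j = 0) : (f * g).coeff (s + m) = f.coeff s * g.coeff m := by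
  rw [coeff_mul]
  apply Finset.sum_eq_single_of_mem (s, m) (by rw [Finset.HasAntidiagonal.mem_antidiagonal])
  rintro ⟨i, k⟩ hik hne
  rw [Finset.HasAntidiagonal.mem_antidiagonal] at hik
  rcases lt_or_ge i s with hi | hi
  · rw [hf i hi, zero_mul]
  · rcases Nat.eq_or_lt_of_le hi with h | h
    · exfalso
      have hk : k = m := by omega
      subst hk
      rw [← h] at hne
      exact hne rfl
    · rw [hg k (by omega), mul_zero]

lemma coeff_mul_one' (f g : L[X]) :
    (f * g).coeff 1 = f.coeff 0 * g.coeff 1 + f.coeff 1 * g.coeff 0 := by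
  rw [coeff_mul, show (Finset.HasAntidiagonal.antidiagonal 1 : Finset (ℕ × ℕ)) = {(0, 1), (1, 0)} by decide]
  simp

end coeffs

noncomputable abbrev D (K L : Type*) [Field K] [Field L] [Algebra K L] : Subring (Polynomial L) :=
  Subring.comap (Polynomial.constantCoeff : Polynomial L →+* L) (algebraMap K L).range

section main
variable {K L : Type*} [Field K] [Field L] [Algebra K L]

lemma mem_D_iff {f : L[X]} : f ∈ D K L ↔ ∃ k : K, algebraMap K L k = f.coeff 0 := by
  simp [Subring.mem_comap, RingHom.mem_range, constantCoeff_apply]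


/-- The ideal of elements with vanishing coefficients below `m` and `m`-th coefficient in `A`. -/
def Tid (A : Submodule K L) (m : ℕ) : Ideal ↥(D K L) where
  carrier := {f | (∀ j < m, (f : L[X]).coeff j = 0) ∧ (f : L[X]).coeff m ∈ A}
  add_mem' := by
    rintro f g ⟨hf1, hf2⟩ ⟨hg1, hg2⟩
    refine ⟨fun j hj => ?_, ?_⟩
    · push_cast
      rw [coeff_add, hf1 j hj, hg1 j hj, add_zero]
    · push_cast
      rw [coeff_add]
      exact A.add_mem hf2 hg2
  zero_mem' := by simp
  smul_mem' := by
    rintro r f ⟨hf1, hf2⟩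
    have hr0 : ∀ j < 0, (r : L[X]).coeff j = 0 := fun j hj => absurd hj (Nat.not_lt_zero j)
    have hco : ((r • f : ↥(D K L)) : L[X]) = (r : L[X]) * (f : L[X]) := by
      rw [smul_eq_mul]; push_cast; ring
    refine ⟨fun j hj => ?_, ?_⟩
    · rw [hco]
      exact coeff_mul_lt hr0 hf1 (by omega)
    · rw [hco]
      have := coeff_mul_top (f := (r : L[X])) (g := (f : L[X])) hr0 hf1
      rw [zero_add] at this
      rw [this]
      obtain ⟨k, hk⟩ := mem_D_iff.mp r.2
      rw [← hk, ← Algebra.smul_def]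
      exact A.smul_mem k hf2

lemma mem_Tid {A : Submodule K L} {m : ℕ} {f : ↥(D K L)} :
    f ∈ Tid A m ↔ (∀ j < m, (f : L[X]).coeff j = 0) ∧ (f : L[X]).coeff m ∈ A := Iff.rfl

lemma mem_Tid_one {A : Submodule K L} {f : ↥(D K L)} :
    f ∈ Tid A 1 ↔ (f : L[X]).coeff 0 = 0 ∧ (f : L[X]).coeff 1 ∈ A := by
  rw [mem_Tid]
  constructor
  · rintro ⟨h1, h2⟩; exact ⟨h1 0 one_pos, h2⟩
  · rintro ⟨h1, h2⟩
    refine ⟨fun j hj => ?_, h2⟩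
    interval_cases j
    exact h1

lemma Tid_ne_top (A : Submodule K L) {m : ℕ} (hm : 0 < m) : Tid A m ≠ ⊤ := by
  intro h
  have : (1 : ↥(D K L)) ∈ Tid A m := h ▸ Submodule.mem_top
  rw [mem_Tid] at this
  have := this.1 0 hm
  simp at this

lemma exists_inv_smul (A : Submodule K L) {x k : L} (hk : ∃ t : K, algebraMap K L t = k)
    (hk0 : k ≠ 0) (h : x * k ∈ A) : x ∈ A := by
  obtain ⟨t, rfl⟩ := hk
  have ht0 : t ≠ 0 := by rintro rfl; simp at hk0
  have := A.smul_mem t⁻¹ h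
  rwa [Algebra.smul_def, map_inv₀, mul_comm, mul_assoc,
    mul_inv_cancel₀ hk0, mul_one] at this

lemma isTwoAbsorbing_Tid_one (A : Submodule K L) : IsTwoAbsorbing (Tid A 1) := by
  intro a b c habc
  rw [mem_Tid_one] at habc
  have hcoe : ((a * b * c : ↥(D K L)) : L[X]) = (a : L[X]) * b * c := by push_cast; ring
  rw [hcoe] at habc
  set a0 := (a : L[X]).coeff 0 with ha0d
  set b0 := (b : L[X]).coeff 0 with hb0d
  set c0 := (c : L[X]).coeff 0 with hc0d
  have h0 : a0 * b0 * c0 = 0 := by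
    rw [← mul_coeff_zero, ← mul_coeff_zero]; exact habc.1
  have h1 : (a0 * b0) * (c : L[X]).coeff 1 +
      (a0 * (b : L[X]).coeff 1 + (a : L[X]).coeff 1 * b0) * c0 ∈ A := by
    have e : ((a : L[X]) * b * c).coeff 1 = (a0 * b0) * (c : L[X]).coeff 1 +
        (a0 * (b : L[X]).coeff 1 + (a : L[X]).coeff 1 * b0) * c0 := by
      rw [coeff_mul_one', coeff_mul_one', mul_coeff_zero]
    rw [← e]; exact habc.2
  have hamem : ∀ x y : ↥(D K L), (x : L[X]).coeff 0 = 0 → (y : L[X]).coeff 0 = 0 →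
      x * y ∈ Tid A 1 := by
    intro x y hx hy
    rw [mem_Tid_one]
    have hc : ((x * y : ↥(D K L)) : L[X]) = (x : L[X]) * y := by push_cast; ring
    rw [hc, mul_coeff_zero, coeff_mul_one', hx, hy]
    simp
  by_cases ha : a0 = 0 <;> by_cases hb : b0 = 0 <;> by_cases hc : c0 = 0
  · exact Or.inl (hamem a b ha hb)
  · exact Or.inl (hamem a b ha hb)
  · exact Or.inr (Or.inl (hamem a c ha hc))
  · -- a0 = 0, b0 ≠ 0, c0 ≠ 0
    left
    rw [mem_Tid_one]
    have hc' : ((a * b : ↥(D K L)) : L[X]) = (a : L[X]) * b := by push_cast; ring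
    rw [hc', mul_coeff_zero, coeff_mul_one', ← ha0d, ← hb0d, ha]
    refine ⟨by ring, ?_⟩
    rw [ha] at h1
    simp only [zero_mul, mul_zero, zero_add, zero_mul, zero_add] at h1
    have : (a : L[X]).coeff 1 * b0 ∈ A := by
      refine exists_inv_smul A (mem_D_iff.mp c.2) hc ?_
      convert h1 using 1 <;> ring
    simpa using this
  · exact Or.inr (Or.inr (hamem b c hb hc))
  · -- b0 = 0, a0 ≠ 0, c0 ≠ 0
    left
    rw [mem_Tid_one]
    have hc' : ((a * b : ↥(D K L)) : L[X]) = (a : L[X]) * b := by push_cast; ring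
    rw [hc', mul_coeff_zero, coeff_mul_one', ← ha0d, ← hb0d, hb]
    refine ⟨by ring, ?_⟩
    rw [hb] at h1
    simp only [mul_zero, zero_mul, zero_add, add_zero] at h1
    have : a0 * (b : L[X]).coeff 1 * c0 ∈ A := by convert h1 using 1 <;> ring
    have := exists_inv_smul A (mem_D_iff.mp c.2) hc this
    simpa using this
  · -- c0 = 0, a0 ≠ 0, b0 ≠ 0
    right; left
    rw [mem_Tid_one]
    have hc' : ((a * c : ↥(D K L)) : L[X]) = (a : L[X]) * c := by push_cast; ring
    rw [hc', mul_coeff_zero, coeff_mul_one', ← ha0d, ← hc0d, hc]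
    refine ⟨by ring, ?_⟩
    rw [hc] at h1
    simp only [mul_zero, add_zero] at h1
    have : (a0 * (c : L[X]).coeff 1) * b0 ∈ A := by convert h1 using 1 <;> ring
    have := exists_inv_smul A (mem_D_iff.mp b.2) hb this
    simpa using this
  · exfalso
    rcases mul_eq_zero.mp h0 with h | h
    · rcases mul_eq_zero.mp h with h | h
      exacts [ha h, hb h]
    · exact hc h


/-- The K-line in L. -/
def Nsub (K L : Type*) [Field K] [Field L] [Algebra K L] : Submodule K L :=
  Submodule.span K {(1 : L)}

lemma mem_Nsub {x : L} : x ∈ Nsub K L ↔ ∃ k : K, algebraMap K L k = x := by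
  rw [Nsub, Submodule.mem_span_singleton]
  constructor
  · rintro ⟨k, rfl⟩; exact ⟨k, by rw [Algebra.smul_def, mul_one]⟩
  · rintro ⟨k, rfl⟩; exact ⟨k, by rw [Algebra.smul_def, mul_one]⟩

lemma Tid_mul (A : Submodule K L) (m : ℕ) (hm : 0 < m) :
    Tid (Nsub K L) 1 * Tid A m = Tid A (m + 1) := by
  apply le_antisymm
  · rw [Ideal.mul_le]
    intro r hr s hs
    rw [mem_Tid_one] at hr
    rw [mem_Tid] at hs
    have hr1 : ∀ j < 1, (r : L[X]).coeff j = 0 := by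
      intro j hj; interval_cases j; exact hr.1
    have hco : ((r * s : ↥(D K L)) : L[X]) = (r : L[X]) * s := by push_cast; ring
    rw [mem_Tid, hco]
    refine ⟨fun j hj => coeff_mul_lt hr1 hs.1 (by omega), ?_⟩
    have := coeff_mul_top hr1 hs.1
    rw [add_comm 1 m] at this
    rw [this]
    obtain ⟨k, hk⟩ := mem_Nsub.mp hr.2
    rw [← hk, ← Algebra.smul_def]
    exact A.smul_mem k hs.2
  · intro f hf
    rw [mem_Tid] at hf
    have hX : (X : L[X]) ∈ D K L := mem_D_iff.mpr ⟨0, by simp⟩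
    have hv0 : ((f : L[X]).divX).coeff 0 = 0 := by
      rw [coeff_divX]; exact hf.1 1 (by omega)
    have hvD : (f : L[X]).divX ∈ D K L := mem_D_iff.mpr ⟨0, by simp [hv0]⟩
    have hfeq : (⟨X, hX⟩ : ↥(D K L)) * ⟨(f : L[X]).divX, hvD⟩ = f := by
      apply Subtype.ext
      push_cast
      have h2 := X_mul_divX_add (f : L[X])
      rw [hf.1 0 (by omega), map_zero, add_zero] at h2
      exact h2
    rw [← hfeq]
    refine Ideal.mul_mem_mul ?_ ?_
    · rw [mem_Tid_one]
      exact ⟨by simp, mem_Nsub.mpr ⟨1, by simp⟩⟩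
    · rw [mem_Tid]
      constructor
      · intro j hj
        show (f : L[X]).divX.coeff j = 0
        rw [coeff_divX]
        exact hf.1 (j + 1) (by omega)
      · show (f : L[X]).divX.coeff m ∈ A
        rw [coeff_divX]
        exact hf.2

lemma Tid_eq_pow_mul (A : Submodule K L) (k : ℕ) :
    Tid A (k + 1) = Tid (Nsub K L) 1 ^ k * Tid A 1 := by
  induction k with
  | zero => rw [pow_zero, one_mul]
  | succ k ih =>
    rw [← Tid_mul A (k + 1) (by omega), ih, pow_succ]
    ring

lemma exists_factorization_Tid (A : Submodule K L) (m : ℕ) (hm : 0 < m) :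
    ∃ (k : ℕ) (J : Fin k → Ideal ↥(D K L)),
      (∀ i, J i ≠ ⊤ ∧ IsTwoAbsorbing (J i)) ∧ Tid A m = ∏ i, J i := by
  obtain ⟨k, rfl⟩ : ∃ k, m = k + 1 := ⟨m - 1, by omega⟩
  refine ⟨k + 1, fun i => if i = 0 then Tid A 1 else Tid (Nsub K L) 1, fun i => ?_, ?_⟩
  · by_cases h : i = 0 <;>
      simp only [h, if_pos, if_neg, ite_true, ite_false] <;>
      exact ⟨Tid_ne_top _ one_pos, isTwoAbsorbing_Tid_one _⟩
  · rw [Fin.prod_univ_succ]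
    simp only [if_pos rfl]
    have hs : ∀ i : Fin k,
        (if (i.succ : Fin (k + 1)) = 0 then Tid A 1 else Tid (Nsub K L) 1) = Tid (Nsub K L) 1 :=
      fun i => if_neg (Fin.succ_ne_zero i)
    rw [Finset.prod_congr rfl (fun i _ => hs i), Finset.prod_const, Finset.card_univ,
      Fintype.card_fin, Tid_eq_pow_mul]
    simp only [if_true]
    ring


lemma dvd_lift {p f : ↥(D K L)} (h1 : (p : L[X]).coeff 0 = 1)
    (hdvd : (p : L[X]) ∣ (f : L[X])) : p ∣ f := by
  obtain ⟨g, hg⟩ := hdvd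
  have hg0 : g.coeff 0 = (f : L[X]).coeff 0 := by
    rw [hg, mul_coeff_zero, h1, one_mul]
  have hgD : g ∈ D K L := by
    obtain ⟨k, hk⟩ := mem_D_iff.mp f.2
    exact mem_D_iff.mpr ⟨k, by rw [hk, hg0]⟩
  exact ⟨⟨g, hgD⟩, Subtype.ext hg⟩

lemma coe_dvd {p f : ↥(D K L)} (h : p ∣ f) : (p : L[X]) ∣ (f : L[X]) := by
  obtain ⟨t, ht⟩ := h
  exact ⟨t, by rw [ht]; push_cast; ring⟩

lemma span_isPrime (p : ↥(D K L)) (hirr : Irreducible (p : L[X]))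
    (h1 : (p : L[X]).coeff 0 = 1) : (Ideal.span {p}).IsPrime := by
  constructor
  · rw [Ne, Ideal.span_singleton_eq_top]
    intro hu
    exact hirr.not_isUnit (hu.map (D K L).subtype)
  · intro x y hxy
    rw [Ideal.mem_span_singleton] at hxy ⊢
    have hc : (p : L[X]) ∣ (x : L[X]) * (y : L[X]) := by
      have := coe_dvd hxy
      push_cast at this
      exact this
    rcases hirr.prime.2.2 _ _ hc with h | h
    · exact Or.inl (dvd_lift h1 h)
    · right
      rw [Ideal.mem_span_singleton]
      exact dvd_lift h1 h

lemma caseB_eq (I : Ideal ↥(D K L)) (p : ↥(D K L)) (h1 : (p : L[X]).coeff 0 = 1)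
    (hdvd : ∀ f ∈ I, (p : L[X]) ∣ (f : L[X])) :
    I = Ideal.span {p} * I.colon (Submodule.span ↥(D K L) {p}) := by
  apply le_antisymm
  · intro f hf
    obtain ⟨g, hg⟩ := dvd_lift h1 (hdvd f hf)
    have hgmem : g ∈ I.colon (Submodule.span ↥(D K L) {p}) := by
      rw [Submodule.mem_colon_span_singleton, smul_eq_mul, mul_comm, ← hg]
      exact hf
    rw [hg]
    exact Ideal.mul_mem_mul (Ideal.mem_span_singleton_self p) hgmem
  · rw [Ideal.mul_le]
    intro r hr s hs
    rw [Ideal.mem_span_singleton] at hr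
    obtain ⟨t, rfl⟩ := hr
    rw [Submodule.mem_colon_span_singleton, smul_eq_mul] at hs
    have : p * t * s = t * (s * p) := by ring
    rw [this]
    exact I.mul_mem_left t hs

lemma X_mul_mem (I : Ideal ↥(D K L)) {g : L[X]}
    (hg : g ∈ Ideal.span ((fun x : ↥(D K L) => (x : L[X])) '' (I : Set ↥(D K L)))) :
    ∀ w : L[X], ∃ i ∈ I, (i : L[X]) = X * w * g := by
  induction hg using Submodule.span_induction with
  | mem x hx =>
    intro w
    obtain ⟨i, hiI, rfl⟩ := hx
    have hXw : X * w ∈ D K L := mem_D_iff.mpr ⟨0, by simp [mul_coeff_zero]⟩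
    refine ⟨⟨X * w, hXw⟩ * i, I.mul_mem_left _ hiI, ?_⟩
    push_cast
    ring
  | zero => exact fun w => ⟨0, I.zero_mem, by simp⟩
  | add x y hx hy ihx ihy =>
    intro w
    obtain ⟨i, hi, hie⟩ := ihx w
    obtain ⟨j, hj, hje⟩ := ihy w
    refine ⟨i + j, I.add_mem hi hj, ?_⟩
    push_cast
    rw [hie, hje]
    ring
  | smul a x hx ihx =>
    intro w
    obtain ⟨i, hi, hie⟩ := ihx (w * a)
    refine ⟨i, hi, ?_⟩
    rw [hie, smul_eq_mul]
    ring

/-- The set of `m`-th coefficients realized by elements of `I` of the form `C a * X^m`. -/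
def Asub (I : Ideal ↥(D K L)) (m : ℕ) : Submodule K L where
  carrier := {a : L | ∃ i ∈ I, (i : L[X]) = C a * X ^ m}
  zero_mem' := ⟨0, I.zero_mem, by simp⟩
  add_mem' := by
    rintro a b ⟨i, hi, hie⟩ ⟨j, hj, hje⟩
    refine ⟨i + j, I.add_mem hi hj, ?_⟩
    push_cast
    rw [hie, hje, C_add]
    ring
  smul_mem' := by
    rintro k a ⟨i, hi, hie⟩
    have hCk : (C (algebraMap K L k) : L[X]) ∈ D K L := mem_D_iff.mpr ⟨k, by simp⟩
    refine ⟨⟨C (algebraMap K L k), hCk⟩ * i, I.mul_mem_left _ hi, ?_⟩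
    push_cast
    rw [hie, Algebra.smul_def, C_mul]
    ring

lemma mem_Asub {I : Ideal ↥(D K L)} {m : ℕ} {a : L} :
    a ∈ Asub I m ↔ ∃ i ∈ I, (i : L[X]) = C a * X ^ m := Iff.rfl


lemma caseC (I : Ideal ↥(D K L)) (hne : I ≠ ⊤)
    (f₀ : ↥(D K L)) (hf₀ : f₀ ∈ I) (hf₀0 : (f₀ : L[X]) ≠ 0)
    (hnop : ∀ p : L[X], Irreducible p → p.coeff 0 = 1 → ¬ ∀ f ∈ I, p ∣ (f : L[X])) :
    ∃ (m : ℕ), 0 < m ∧ I = Tid (Asub I m) m := by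
  classical
  set S : Ideal L[X] := Ideal.span ((fun x : ↥(D K L) => (x : L[X])) '' (I : Set ↥(D K L)))
    with hSdef
  set h : L[X] := Submodule.IsPrincipal.generator S with hhdef
  have hspan : Ideal.span {h} = S := Ideal.span_singleton_generator S
  have hhmem : h ∈ S := Submodule.IsPrincipal.generator_mem S
  have hfS : ∀ f ∈ I, (f : L[X]) ∈ S := fun f hf => Ideal.subset_span ⟨f, hf, rfl⟩
  have hdvd : ∀ f ∈ I, h ∣ (f : L[X]) := fun f hf =>
    Ideal.mem_span_singleton.mp (hspan ▸ hfS f hf)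
  have hh0 : h ≠ 0 := by
    intro h0
    have := hdvd f₀ hf₀
    rw [h0] at this
    exact hf₀0 (zero_dvd_iff.mp this)
  set m : ℕ := rootMultiplicity 0 h with hmdef
  obtain ⟨g, hg, hgnd⟩ := Polynomial.exists_eq_pow_rootMultiplicity_mul_and_not_dvd h hh0 0
  rw [map_zero, sub_zero] at hg hgnd
  rw [← hmdef] at hg
  have hg0 : g.coeff 0 ≠ 0 := fun hc => hgnd (X_dvd_iff.mpr hc)
  have hgnz : g ≠ 0 := fun h' => hg0 (by simp [h'])
  -- g is a nonzero constant
  have hgC : g.natDegree = 0 := by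
    by_contra hnd
    have hgu : ¬ IsUnit g := by
      intro hu
      exact hnd (natDegree_eq_zero_of_isUnit hu)
    obtain ⟨q, hqirr, hqdvd⟩ := WfDvdMonoid.exists_irreducible_factor hgu hgnz
    have hq0 : q.coeff 0 ≠ 0 := fun hc => hgnd (dvd_trans (X_dvd_iff.mpr hc) hqdvd)
    set p : L[X] := C (q.coeff 0)⁻¹ * q with hpdef
    have hu : IsUnit (C (q.coeff 0)⁻¹ : L[X]) := isUnit_C.mpr (isUnit_iff_ne_zero.mpr
      (inv_ne_zero hq0))
    have hassoc : Associated q p := ⟨hu.unit, by rw [hpdef]; simp [IsUnit.unit_spec]; ring⟩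
    have hpirr : Irreducible p := hassoc.irreducible hqirr
    have hp0 : p.coeff 0 = 1 := by
      rw [hpdef, coeff_C_mul, inv_mul_cancel₀ hq0]
    refine hnop p hpirr hp0 (fun f hf => ?_)
    have h1 : p ∣ q := hassoc.symm.dvd
    have h2 : g ∣ h := ⟨X ^ m, by rw [hg]; ring⟩
    exact dvd_trans (dvd_trans (dvd_trans h1 hqdvd) h2) (hdvd f hf)
  set c : L := g.coeff 0 with hcdef
  have hgc : g = C c := eq_C_of_natDegree_eq_zero hgC
  have hhXm : h = X ^ m * C c := by rw [hg, hgc]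
  -- X^(m+1) * L[X] is contained in (the image of) I
  have hXm1 : ∀ v : L[X], ∃ i ∈ I, (i : L[X]) = X ^ (m + 1) * v := by
    intro v
    obtain ⟨i, hi, hie⟩ := X_mul_mem I hhmem (C c⁻¹ * v)
    refine ⟨i, hi, ?_⟩
    rw [hie, hhXm]
    have : X * (C c⁻¹ * v) * (X ^ m * C c) = X ^ (m + 1) * v * (C c⁻¹ * C c) := by ring
    rw [this, ← C_mul, inv_mul_cancel₀ hg0, C_1, mul_one]
  -- m is positive
  have hm : 0 < m := by
    by_contra hm0
    have hm0' : m = 0 := by omega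
    have hex : ∃ f ∈ I, (f : L[X]).coeff 0 ≠ 0 := by
      by_contra hall
      push_neg at hall
      have hle : S ≤ Ideal.span {(X : L[X])} := by
        rw [hSdef, Ideal.span_le]
        rintro _ ⟨f, hf, rfl⟩
        exact Ideal.mem_span_singleton.mpr (X_dvd_iff.mpr (hall f hf))
      have hXh : (X : L[X]) ∣ h := Ideal.mem_span_singleton.mp (hle hhmem)
      rw [hhXm, hm0', pow_zero, one_mul] at hXh
      exact hg0 (by simpa using X_dvd_iff.mp hXh)
    obtain ⟨f, hf, hfc⟩ := hex
    obtain ⟨i, hi, hie⟩ := hXm1 ((f : L[X]).divX)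
    rw [hm0', zero_add, pow_one] at hie
    have hfi : (f : L[X]) - (i : L[X]) = C ((f : L[X]).coeff 0) := by
      rw [hie]
      have h2 := X_mul_divX_add (f : L[X])
      linear_combination -h2
    obtain ⟨k, hk⟩ := mem_D_iff.mp f.2
    have hunit : IsUnit (f - i) := by
      have hinv : (C ((f : L[X]).coeff 0)⁻¹ : L[X]) ∈ D K L := by
        refine mem_D_iff.mpr ⟨k⁻¹, ?_⟩
        rw [map_inv₀, hk]
        simp
      refine IsUnit.of_mul_eq_one (a := f - i) ⟨_, hinv⟩ ?_
      apply Subtype.ext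
      push_cast
      rw [hfi, ← C_mul, mul_inv_cancel₀ hfc, C_1]
    exact hne (I.eq_top_of_isUnit_mem (I.sub_mem hf hi) hunit)
  refine ⟨m, hm, ?_⟩
  have hsplit : ∀ f : ↥(D K L), (X : L[X]) ^ (m + 1) ∣ ((f : L[X]) - C ((f : L[X]).coeff m) * X ^ m) ↔
      (∀ j < m, (f : L[X]).coeff j = 0) := by
    intro f
    rw [X_pow_dvd_iff]
    constructor
    · intro hd j hj
      have := hd j (by omega)
      rw [coeff_sub, coeff_C_mul, coeff_X_pow, if_neg (by omega), mul_zero, sub_zero] at this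
      exact this
    · intro hv d hd
      rw [coeff_sub, coeff_C_mul, coeff_X_pow]
      rcases lt_or_ge d m with h' | h'
      · rw [if_neg (by omega), mul_zero, sub_zero]
        exact hv d h'
      · have : d = m := by omega
        subst this
        rw [if_pos rfl, mul_one, sub_self]
  apply le_antisymm
  · intro f hf
    have hXdvd : (X : L[X]) ^ m ∣ (f : L[X]) :=
      dvd_trans ⟨C c, hhXm⟩ (hdvd f hf)
    have hcoeff : ∀ j < m, (f : L[X]).coeff j = 0 := fun j hj => X_pow_dvd_iff.mp hXdvd j hj
    rw [mem_Tid]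
    refine ⟨hcoeff, ?_⟩
    obtain ⟨v, hv⟩ := (hsplit f).mpr hcoeff
    obtain ⟨i, hi, hie⟩ := hXm1 v
    rw [mem_Asub]
    refine ⟨f - i, I.sub_mem hf hi, ?_⟩
    push_cast
    rw [hie, ← hv]
    ring
  · intro f hf
    rw [mem_Tid] at hf
    obtain ⟨hcoeff, ha⟩ := hf
    rw [mem_Asub] at ha
    obtain ⟨i₀, hi₀, hie₀⟩ := ha
    obtain ⟨v, hv⟩ := (hsplit f).mpr hcoeff
    obtain ⟨i, hi, hie⟩ := hXm1 v
    have : f = i₀ + i := by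
      apply Subtype.ext
      push_cast
      rw [hie, hie₀, ← hv]
      ring
    rw [this]
    exact I.add_mem hi₀ hi


lemma aux (n : ℕ) :
    ∀ I : Ideal ↥(D K L), (∃ f ∈ I, (f : L[X]) ≠ 0 ∧ (f : L[X]).natDegree ≤ n) →
      ∃ (k : ℕ) (J : Fin k → Ideal ↥(D K L)),
        (∀ i, J i ≠ ⊤ ∧ IsTwoAbsorbing (J i)) ∧ I = ∏ i, J i := by
  induction n using Nat.strong_induction_on with
  | _ n ih =>
  rintro I ⟨f₀, hf₀I, hf₀ne, hf₀deg⟩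
  by_cases htop : I = ⊤
  · exact ⟨0, fun i => i.elim0, fun i => i.elim0, by simp [htop, Ideal.one_eq_top]⟩
  by_cases hb : ∃ p : L[X], Irreducible p ∧ p.coeff 0 = 1 ∧ ∀ f ∈ I, p ∣ (f : L[X])
  · obtain ⟨p, hpirr, hp1, hpdvd⟩ := hb
    have hpD : p ∈ D K L := mem_D_iff.mpr ⟨1, by rw [map_one, hp1]⟩
    set P : ↥(D K L) := ⟨p, hpD⟩ with hPdef
    have hP1 : (P : L[X]).coeff 0 = 1 := hp1
    have heq : I = Ideal.span {P} * I.colon (Submodule.span ↥(D K L) {P}) :=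
      caseB_eq I P hP1 hpdvd
    obtain ⟨g, hg⟩ := hpdvd f₀ hf₀I
    have hgne : g ≠ 0 := fun h' => hf₀ne (by rw [hg, h', mul_zero])
    have hgD : g ∈ D K L := by
      obtain ⟨k, hk⟩ := mem_D_iff.mp f₀.2
      refine mem_D_iff.mpr ⟨k, ?_⟩
      rw [hk, hg, mul_coeff_zero, hp1, one_mul]
    have hgI' : (⟨g, hgD⟩ : ↥(D K L)) ∈ I.colon (Submodule.span ↥(D K L) {P}) := by
      rw [Submodule.mem_colon_span_singleton, smul_eq_mul]
      have : (⟨g, hgD⟩ : ↥(D K L)) * P = f₀ := by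
        apply Subtype.ext
        push_cast
        rw [hg]
        ring
      rw [this]
      exact hf₀I
    have hpdeg : 0 < p.natDegree := by
      rcases Nat.eq_zero_or_pos p.natDegree with h' | h'
      swap
      · exact h'
      · exfalso
        have : p = 1 := by
          rw [eq_C_of_natDegree_eq_zero h', hp1, C_1]
        exact hpirr.not_isUnit (this ▸ isUnit_one)
    have hdeg : g.natDegree < n := by
      have hpne : p ≠ 0 := hpirr.ne_zero
      have : (f₀ : L[X]).natDegree = p.natDegree + g.natDegree := by
        rw [hg]
        exact natDegree_mul hpne hgne
      omega
    obtain ⟨k, J', hJ', hprod⟩ := ih g.natDegree hdeg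
      (I.colon (Submodule.span ↥(D K L) {P})) ⟨⟨g, hgD⟩, hgI', hgne, le_rfl⟩
    have hprime := span_isPrime P hpirr hP1
    refine ⟨k + 1, Fin.cons (Ideal.span {P}) J', ?_, ?_⟩
    · intro i
      refine Fin.cases ?_ (fun j => ?_) i
      · rw [Fin.cons_zero]
        exact ⟨hprime.ne_top, prime_isTwoAbsorbing hprime⟩
      · rw [Fin.cons_succ]
        exact hJ' j
    · rw [Fin.prod_cons, ← hprod]
      exact heq
  · push_neg at hb
    have hb' : ∀ p : L[X], Irreducible p → p.coeff 0 = 1 → ¬ ∀ f ∈ I, p ∣ (f : L[X]) := by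
      intro p h1 h2 hall
      obtain ⟨f, hf, hnd⟩ := hb p h1 h2
      exact hnd (hall f hf)
    obtain ⟨m, hm, hI⟩ := caseC I htop f₀ hf₀I hf₀ne hb'
    rw [hI]
    exact exists_factorization_Tid (Asub I m) m hm

end main
end KXLX


theorem K_plus_XLX_is_TAF {K L : Type*} [Field K] [Field L] [Algebra K L] :
    IsTAFRing (Subring.comap (Polynomial.constantCoeff : Polynomial L →+* L)
      (algebraMap K L).range) := by
  intro I hne
  by_cases hbot : I = ⊥
  · refine ⟨1, fun _ => ⊥, fun i => ⟨?_, ?_⟩, by simp [hbot]⟩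
    · show (⊥ : Ideal ↥(KXLX.D K L)) ≠ ⊤
      intro h
      have h1 : (1 : ↥(KXLX.D K L)) ∈ (⊥ : Ideal ↥(KXLX.D K L)) := h ▸ Submodule.mem_top
      rw [Ideal.mem_bot] at h1
      have : ((1 : ↥(KXLX.D K L)) : Polynomial L) = 0 := by rw [h1]; rfl
      simp at this
    · show IsTwoAbsorbing (⊥ : Ideal ↥(KXLX.D K L))
      intro a b c habc
      rw [Ideal.mem_bot] at habc
      have hz : (a : Polynomial L) * b * c = 0 := by
        have : ((a * b * c : ↥(KXLX.D K L)) : Polynomial L) = 0 := by rw [habc]; rfl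
        push_cast at this
        exact this
      rcases mul_eq_zero.mp hz with h' | h'
      · left
        rw [Ideal.mem_bot]
        apply Subtype.ext
        push_cast
        exact h'
      · right; right
        rw [Ideal.mem_bot]
        apply Subtype.ext
        push_cast
        rw [h', mul_zero]
  · obtain ⟨f, hfI, hfne⟩ := Submodule.exists_mem_ne_zero_of_ne_bot hbot
    have hfne' : (f : Polynomial L) ≠ 0 := fun h' => hfne (Subtype.ext h')
    exact KXLX.aux (f : Polynomial L).natDegree I ⟨f, hfI, hfne', le_rfl⟩
end

section
/- Let d be a square-free integer, d ≠ 0, 1, with d ≡ 1 (mod 4). Then ℤ[√d] is a TAF-domain if and only if d ≡ 5 (mod 8). -/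
namespace ZTAF

variable {d : ℤ}

/-- The ideal `aℤ + (b+√d)ℤ` of `ℤ√d`. -/
def Qd (d a b : ℤ) : Ideal (Zsqrtd d) := Ideal.span {(a : Zsqrtd d), ⟨b, 1⟩}

lemma psi_mul (b : ℤ) (z w : Zsqrtd d) :
    (z * w).re - b * (z * w).im
      = (z.re - b * z.im) * (w.re - b * w.im) + z.im * w.im * (d - b ^ 2) := by
  simp only [Zsqrtd.re_mul, Zsqrtd.im_mul]; ring

lemma mem_Qd {a b : ℤ} (hab : a ∣ d - b ^ 2) {z : Zsqrtd d} :
    z ∈ Qd d a b ↔ a ∣ z.re - b * z.im := by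
  obtain ⟨k, hk⟩ := hab
  constructor
  · intro hz
    rw [Qd, Ideal.mem_span_pair] at hz
    obtain ⟨α, β, h⟩ := hz
    have hre := congrArg Zsqrtd.re h
    have him := congrArg Zsqrtd.im h
    simp only [Zsqrtd.re_add, Zsqrtd.im_add, Zsqrtd.re_mul, Zsqrtd.im_mul,
      Zsqrtd.re_intCast, Zsqrtd.im_intCast, mul_zero, mul_one, add_zero, zero_add] at hre him
    exact ⟨α.re - b * α.im + β.im * k, by linear_combination -hre + b * him + β.im * hk⟩
  · rintro ⟨t, ht⟩
    rw [Qd, Ideal.mem_span_pair]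
    refine ⟨(t : Zsqrtd d), (z.im : Zsqrtd d), ?_⟩
    rw [Zsqrtd.ext_iff]
    refine ⟨?_, ?_⟩
    · simp only [Zsqrtd.re_add, Zsqrtd.re_mul, Zsqrtd.re_intCast, Zsqrtd.im_intCast]
      linarith [ht]
    · simp only [Zsqrtd.im_add, Zsqrtd.im_mul, Zsqrtd.re_intCast, Zsqrtd.im_intCast]
      ring

lemma mem_span_int {c : ℤ} {z : Zsqrtd d} :
    z ∈ Ideal.span {(c : Zsqrtd d)} ↔ c ∣ z.re ∧ c ∣ z.im := by
  rw [Ideal.mem_span_singleton, Zsqrtd.intCast_dvd]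

lemma Qd_ne_top {a b : ℤ} (hab : a ∣ d - b ^ 2) (ha : ¬IsUnit a) : Qd d a b ≠ ⊤ := by
  intro h
  have h1 : (1 : Zsqrtd d) ∈ Qd d a b := h ▸ Submodule.mem_top
  rw [mem_Qd hab] at h1
  simp only [Zsqrtd.re_one, Zsqrtd.im_one, mul_zero, sub_zero] at h1
  exact ha (isUnit_of_dvd_one h1)

lemma span_int_ne_top {c : ℤ} (hc : ¬IsUnit c) : Ideal.span {(c : Zsqrtd d)} ≠ ⊤ := by
  intro h
  have h1 : (1 : Zsqrtd d) ∈ Ideal.span {(c : Zsqrtd d)} := h ▸ Submodule.mem_top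
  rw [mem_span_int] at h1
  exact hc (isUnit_of_dvd_one (by simpa using h1.1))

lemma isTwoAbsorbing_of_isPrime {I : Ideal (Zsqrtd d)} (h : I.IsPrime) : IsTwoAbsorbing I := by
  intro a b c habc
  rcases h.mem_or_mem habc with h1 | h1
  · exact Or.inl h1
  · exact Or.inr (Or.inl (I.mul_mem_left a h1))

lemma psi_dvd_mul {a b : ℤ} (hab : a ∣ d - b ^ 2) {z w : Zsqrtd d}
    (h : a ∣ (z.re - b * z.im) * (w.re - b * w.im)) :
    a ∣ (z * w).re - b * (z * w).im := by
  rw [psi_mul]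
  exact dvd_add h (Dvd.dvd.mul_left hab _)

lemma dvd_psi_psi {a b : ℤ} (hab : a ∣ d - b ^ 2) {z w : Zsqrtd d}
    (h : a ∣ (z * w).re - b * (z * w).im) :
    a ∣ (z.re - b * z.im) * (w.re - b * w.im) := by
  rw [psi_mul] at h
  have h2 := dvd_sub h (Dvd.dvd.mul_left hab (z.im * w.im))
  simpa using h2

/-- `Qd d p b` is a prime ideal when `p` is prime and `p ∣ d - b²`. -/
lemma Qd_isPrime {p b : ℤ} (hp : Prime p) (hab : p ∣ d - b ^ 2) : (Qd d p b).IsPrime := by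
  constructor
  · exact Qd_ne_top hab hp.not_unit
  · intro z w hzw
    rw [mem_Qd hab] at hzw ⊢
    rw [mem_Qd hab]
    exact hp.dvd_mul.mp (dvd_psi_psi hab hzw)

lemma twoAbsorbing_Qd_prime {p b : ℤ} (hp : Prime p) (hab : p ∣ d - b ^ 2) :
    IsTwoAbsorbing (Qd d p b) :=
  isTwoAbsorbing_of_isPrime (Qd_isPrime hp hab)

/-- `Qd d p² b` is 2-absorbing when `p` is prime and `p² ∣ d - b²`. -/
lemma twoAbsorbing_Qd_prime_sq {p b : ℤ} (hp : Prime p) (hab : p ^ 2 ∣ d - b ^ 2) :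
    IsTwoAbsorbing (Qd d (p ^ 2) b) := by
  intro x y z hxyz
  rw [mem_Qd hab] at hxyz
  set px := x.re - b * x.im with hpx
  set py := y.re - b * y.im with hpy
  set pz := z.re - b * z.im with hpz
  have key : p ^ 2 ∣ px * py * pz := by
    have h1 := dvd_psi_psi hab hxyz
    have h3 := psi_mul (d := d) b x y
    have h2 : ((x * y).re - b * (x * y).im) * pz - px * py * pz
        = (x.im * y.im * pz) * (d - b ^ 2) := by
      rw [hpx, hpy, hpz]; linear_combination (z.re - b * z.im) * h3
    have h4 : p ^ 2 ∣ ((x * y).re - b * (x * y).im) * pz - px * py * pz := by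
      rw [h2]; exact Dvd.dvd.mul_left hab _
    have h5 := dvd_sub h1 h4
    simpa [hpz] using h5
  have hstrip : ∀ A B C : ℤ, p ^ 2 ∣ A * B * C → ¬p ∣ A → ¬p ∣ B → p ^ 2 ∣ C := by
    intro A B C h hA hB
    have hco : IsCoprime (p ^ 2) (A * B) :=
      ((hp.coprime_iff_not_dvd.mpr hA).mul_right (hp.coprime_iff_not_dvd.mpr hB)).pow_left
    exact hco.dvd_of_dvd_mul_right (by rwa [show C * (A * B) = A * B * C from by ring])
  have pair : p ^ 2 ∣ px * py ∨ p ^ 2 ∣ px * pz ∨ p ^ 2 ∣ py * pz := by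
    by_cases hx : p ∣ px
    · by_cases hy : p ∣ py
      · exact Or.inl (by rw [pow_two]; exact mul_dvd_mul hx hy)
      · by_cases hz : p ∣ pz
        · exact Or.inr (Or.inl (by rw [pow_two]; exact mul_dvd_mul hx hz))
        · refine Or.inl (Dvd.dvd.mul_right ?_ _)
          exact hstrip py pz px (by rwa [show py * pz * px = px * py * pz from by ring]) hy hz
    · by_cases hy : p ∣ py
      · by_cases hz : p ∣ pz
        · exact Or.inr (Or.inr (by rw [pow_two]; exact mul_dvd_mul hy hz))
        · refine Or.inl (Dvd.dvd.mul_left ?_ _)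
          exact hstrip px pz py (by rwa [show px * pz * py = px * py * pz from by ring]) hx hz
      · refine Or.inr (Or.inl (Dvd.dvd.mul_left ?_ _))
        exact hstrip px py pz key hx hy
  rcases pair with h | h | h
  · exact Or.inl ((mem_Qd hab).mpr (psi_dvd_mul hab h))
  · exact Or.inr (Or.inl ((mem_Qd hab).mpr (psi_dvd_mul hab h)))
  · exact Or.inr (Or.inr ((mem_Qd hab).mpr (psi_dvd_mul hab h)))


/-! ### parity tools and the prime 2 -/

lemma two_dvd_iff_even (n : ℤ) : 2 ∣ n ↔ Even n :=
  ⟨fun ⟨k, hk⟩ => ⟨k, by omega⟩, fun ⟨k, hk⟩ => ⟨k, by omega⟩⟩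

lemma u_mul_even (hd4 : d % 4 = 1) {z w : Zsqrtd d}
    (hz : 2 ∣ z.re + z.im) (hw : 2 ∣ w.re + w.im) :
    z * w ∈ Ideal.span {((2 : ℤ) : Zsqrtd d)} := by
  rw [mem_span_int]
  obtain ⟨zr, zi⟩ := z
  obtain ⟨wr, wi⟩ := w
  simp only [Zsqrtd.re_mul, Zsqrtd.im_mul] at *
  obtain ⟨s, hs⟩ := hz
  obtain ⟨t, ht⟩ := hw
  obtain ⟨m, hm⟩ : ∃ m, d = 4 * m + 1 := ⟨d / 4, by omega⟩
  have hzr : zr = 2 * s - zi := by omega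
  have hwr : wr = 2 * t - wi := by omega
  subst hzr hwr hm
  constructor
  · exact ⟨2 * s * t - s * wi - t * zi + zi * wi + 2 * m * zi * wi, by ring⟩
  · exact ⟨s * wi + t * zi - zi * wi, by ring⟩

lemma u_mul_odd (hd4 : d % 4 = 1) {z w : Zsqrtd d}
    (hz : ¬ 2 ∣ z.re + z.im) (hw : ¬ 2 ∣ w.re + w.im) :
    ¬ 2 ∣ (z * w).re + (z * w).im := by
  intro h
  have hid : (z.re + z.im) * (w.re + w.im)
      = ((z * w).re + (z * w).im) - z.im * w.im * (d - 1) := by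
    simp only [Zsqrtd.re_mul, Zsqrtd.im_mul]; ring
  have hd1 : (2 : ℤ) ∣ d - 1 := by omega
  have h2 : (2 : ℤ) ∣ (z.re + z.im) * (w.re + w.im) := by
    rw [hid]; exact dvd_sub h (hd1.mul_left _)
  rcases Int.even_mul.mp ((two_dvd_iff_even _).mp h2) with h3 | h3
  · exact hz ((two_dvd_iff_even _).mpr h3)
  · exact hw ((two_dvd_iff_even _).mpr h3)

lemma norm_odd_of (hd4 : d % 4 = 1) {z : Zsqrtd d} (hz : ¬ 2 ∣ z.re + z.im) :
    ¬ 2 ∣ Zsqrtd.norm z := by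
  intro h
  rw [two_dvd_iff_even] at h
  apply hz
  rw [two_dvd_iff_even, Int.even_add]
  have hd' : ¬ Even d := by rw [← two_dvd_iff_even]; omega
  have hnorm : Zsqrtd.norm z = z.re * z.re - d * z.im * z.im := rfl
  rw [hnorm, Int.even_sub] at h
  simp only [Int.even_mul, or_self, hd', false_or] at h
  exact h

lemma mem_two_strip (hd4 : d % 4 = 1) {x w : Zsqrtd d}
    (hw : ¬ 2 ∣ w.re + w.im) (h : x * w ∈ Ideal.span {((2 : ℤ) : Zsqrtd d)}) :
    x ∈ Ideal.span {((2 : ℤ) : Zsqrtd d)} := by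
  have h2 : (x * w) * star w ∈ Ideal.span {((2 : ℤ) : Zsqrtd d)} :=
    Ideal.mul_mem_right _ _ h
  have h3 : (x * w) * star w = x * ((Zsqrtd.norm w : ℤ) : Zsqrtd d) := by
    rw [Zsqrtd.norm_eq_mul_conj, mul_assoc]
  rw [h3, mem_span_int] at h2
  have hre : (x * ((Zsqrtd.norm w : ℤ) : Zsqrtd d)).re = x.re * Zsqrtd.norm w := by
    simp [Zsqrtd.re_mul]
  have him : (x * ((Zsqrtd.norm w : ℤ) : Zsqrtd d)).im = x.im * Zsqrtd.norm w := by
    simp [Zsqrtd.im_mul]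
  rw [hre, him] at h2
  have hN := norm_odd_of hd4 hw
  rw [mem_span_int]
  constructor
  · exact (Int.prime_two.dvd_mul.mp h2.1).resolve_right hN
  · exact (Int.prime_two.dvd_mul.mp h2.2).resolve_right hN

lemma twoAbsorbing_two (hd4 : d % 4 = 1) :
    IsTwoAbsorbing (Ideal.span {((2 : ℤ) : Zsqrtd d)}) := by
  intro x y z hxyz
  by_cases hx : 2 ∣ x.re + x.im
  · by_cases hy : 2 ∣ y.re + y.im
    · exact Or.inl (u_mul_even hd4 hx hy)
    · by_cases hz : 2 ∣ z.re + z.im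
      · exact Or.inr (Or.inl (u_mul_even hd4 hx hz))
      · -- y, z odd : strip to x
        have hxmem : x ∈ Ideal.span {((2 : ℤ) : Zsqrtd d)} := by
          apply mem_two_strip hd4 (u_mul_odd hd4 hy hz)
          rwa [← mul_assoc]
        exact Or.inl (Ideal.mul_mem_right _ _ hxmem)
  · by_cases hy : 2 ∣ y.re + y.im
    · by_cases hz : 2 ∣ z.re + z.im
      · exact Or.inr (Or.inr (u_mul_even hd4 hy hz))
      · have hymem : y ∈ Ideal.span {((2 : ℤ) : Zsqrtd d)} := by
          apply mem_two_strip hd4 (u_mul_odd hd4 hx hz)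
          rwa [show y * (x * z) = x * y * z from by ring]
        exact Or.inl (Ideal.mul_mem_left _ _ hymem)
    · by_cases hz : 2 ∣ z.re + z.im
      · have hzmem : z ∈ Ideal.span {((2 : ℤ) : Zsqrtd d)} := by
          apply mem_two_strip hd4 (u_mul_odd hd4 hx hy)
          rwa [show z * (x * y) = x * y * z from by ring]
        exact Or.inr (Or.inl (Ideal.mul_mem_left _ _ hzmem))
      · exfalso
        have hodd := u_mul_odd hd4 (u_mul_odd hd4 hx hy) hz
        rw [mem_span_int] at hxyz
        exact hodd (dvd_add hxyz.1 hxyz.2)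

/-! ### inert odd primes -/

lemma span_prime_isPrime {p : ℤ} (hp : Prime p) (hnr : ∀ b : ℤ, ¬ p ∣ b ^ 2 - d) :
    (Ideal.span {(p : Zsqrtd d)}).IsPrime := by
  constructor
  · exact span_int_ne_top hp.not_unit
  · intro z w hzw
    rw [mem_span_int] at hzw
    obtain ⟨h1, h2⟩ := hzw
    rw [Zsqrtd.re_mul] at h1
    rw [Zsqrtd.im_mul] at h2
    by_cases hN : p ∣ z.re * z.re - d * (z.im * z.im)
    · left
      rw [mem_span_int]
      by_cases hzi : p ∣ z.im
      · have hzr : p ∣ z.re := by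
          have hd2 : p ∣ d * (z.im * z.im) := by
            have h5 := hzi.mul_left (d * z.im)
            rwa [mul_assoc] at h5
          have hrr : p ∣ z.re * z.re := by
            have := dvd_add hN hd2
            simpa using this
          exact (hp.dvd_mul.mp hrr).elim id id
        exact ⟨hzr, hzi⟩
      · exfalso
        obtain ⟨u, v, huv⟩ := hp.coprime_iff_not_dvd.mpr hzi
        apply hnr (v * z.re)
        have hv : p ∣ v * z.im - 1 := ⟨-u, by linarith [huv]⟩
        have hterm : p ∣ (v * z.im - 1) * (d * (v * z.im + 1)) := hv.mul_right _
        have hcomb := dvd_add (hN.mul_left (v ^ 2)) hterm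
        rw [show v ^ 2 * (z.re * z.re - d * (z.im * z.im))
            + (v * z.im - 1) * (d * (v * z.im + 1)) = (v * z.re) ^ 2 - d from by ring] at hcomb
        exact hcomb
    · right
      rw [mem_span_int]
      have k1 : p ∣ w.re * (z.re * z.re - d * (z.im * z.im)) := by
        have := dvd_sub (h1.mul_left z.re) (h2.mul_left (d * z.im))
        rwa [show z.re * (z.re * w.re + d * z.im * w.im)
            - d * z.im * (z.re * w.im + z.im * w.re)
            = w.re * (z.re * z.re - d * (z.im * z.im)) from by ring] at this
      have k2 : p ∣ w.im * (z.re * z.re - d * (z.im * z.im)) := by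
        have := dvd_sub (h2.mul_left z.re) (h1.mul_left z.im)
        rwa [show z.re * (z.re * w.im + z.im * w.re)
            - z.im * (z.re * w.re + d * z.im * w.im)
            = w.im * (z.re * z.re - d * (z.im * z.im)) from by ring] at this
      exact ⟨(hp.dvd_mul.mp k1).resolve_right hN, (hp.dvd_mul.mp k2).resolve_right hN⟩



/-! ### product identities -/

lemma mem_Qd_gen1 (a b : ℤ) : (a : Zsqrtd d) ∈ Qd d a b :=
  Ideal.subset_span (Set.mem_insert _ _)

lemma mem_Qd_gen2 (a b : ℤ) : (⟨b, 1⟩ : Zsqrtd d) ∈ Qd d a b :=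
  Ideal.subset_span (Set.mem_insert_of_mem _ rfl)

lemma Qd_mul_Qd {m n b : ℤ} (hmn : m * n ∣ d - b ^ 2)
    (hc : ∃ u v w : ℤ, u * m + v * n + w * (2 * b) = 1) :
    Qd d m b * Qd d n b = Qd d (m * n) b := by
  have hm : m ∣ d - b ^ 2 := (dvd_mul_right m n).trans hmn
  have hn : n ∣ d - b ^ 2 := (dvd_mul_left n m).trans hmn
  apply le_antisymm
  · rw [Ideal.mul_le]
    intro r hr s hs
    rw [mem_Qd hm] at hr
    rw [mem_Qd hn] at hs
    rw [mem_Qd hmn]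
    exact psi_dvd_mul hmn (mul_dvd_mul hr hs)
  · rw [Qd, Ideal.span_le]
    intro g hg
    rcases Set.mem_insert_iff.mp hg with hg | hg
    · subst hg
      have hcast : ((m * n : ℤ) : Zsqrtd d) = (m : Zsqrtd d) * (n : Zsqrtd d) := by
        push_cast; ring
      rw [hcast]
      exact Ideal.mul_mem_mul (mem_Qd_gen1 m b) (mem_Qd_gen1 n b)
    · rw [Set.mem_singleton_iff] at hg
      subst hg
      obtain ⟨u, v, w, huvw⟩ := hc
      obtain ⟨k, hk⟩ := hmn
      have t1 : (m : Zsqrtd d) * ⟨b, 1⟩ ∈ Qd d m b * Qd d n b :=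
        Ideal.mul_mem_mul (mem_Qd_gen1 m b) (mem_Qd_gen2 n b)
      have t2 : (⟨b, 1⟩ : Zsqrtd d) * (n : Zsqrtd d) ∈ Qd d m b * Qd d n b :=
        Ideal.mul_mem_mul (mem_Qd_gen2 m b) (mem_Qd_gen1 n b)
      have t3 : (⟨b, 1⟩ : Zsqrtd d) * ⟨b, 1⟩ ∈ Qd d m b * Qd d n b :=
        Ideal.mul_mem_mul (mem_Qd_gen2 m b) (mem_Qd_gen2 n b)
      have t4 : (m : Zsqrtd d) * (n : Zsqrtd d) ∈ Qd d m b * Qd d n b :=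
        Ideal.mul_mem_mul (mem_Qd_gen1 m b) (mem_Qd_gen1 n b)
      have hX : (u : Zsqrtd d) * ((m : Zsqrtd d) * ⟨b, 1⟩)
          + (v : Zsqrtd d) * ((⟨b, 1⟩ : Zsqrtd d) * (n : Zsqrtd d))
          + (w : Zsqrtd d) * ((⟨b, 1⟩ : Zsqrtd d) * ⟨b, 1⟩
              - (k : Zsqrtd d) * ((m : Zsqrtd d) * (n : Zsqrtd d)))
          ∈ Qd d m b * Qd d n b := by
        refine Submodule.add_mem _ (Submodule.add_mem _ ?_ ?_) ?_
        · exact Ideal.mul_mem_left _ _ t1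
        · exact Ideal.mul_mem_left _ _ t2
        · exact Ideal.mul_mem_left _ _ (Submodule.sub_mem _ t3 (Ideal.mul_mem_left _ _ t4))
      have hXeq : (u : Zsqrtd d) * ((m : Zsqrtd d) * ⟨b, 1⟩)
          + (v : Zsqrtd d) * ((⟨b, 1⟩ : Zsqrtd d) * (n : Zsqrtd d))
          + (w : Zsqrtd d) * ((⟨b, 1⟩ : Zsqrtd d) * ⟨b, 1⟩
              - (k : Zsqrtd d) * ((m : Zsqrtd d) * (n : Zsqrtd d)))
          = (⟨b, 1⟩ : Zsqrtd d) := by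
        rw [Zsqrtd.ext_iff]
        refine ⟨?_, ?_⟩
        · simp only [Zsqrtd.re_add, Zsqrtd.re_sub, Zsqrtd.re_mul, Zsqrtd.im_mul,
            Zsqrtd.im_add, Zsqrtd.im_sub, Zsqrtd.re_intCast, Zsqrtd.im_intCast]
          linear_combination (b : ℤ) * huvw + w * hk
        · simp only [Zsqrtd.re_add, Zsqrtd.re_sub, Zsqrtd.re_mul, Zsqrtd.im_mul,
            Zsqrtd.im_add, Zsqrtd.im_sub, Zsqrtd.re_intCast, Zsqrtd.im_intCast]
          linear_combination huvw
      rw [← hXeq]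
      exact hX

lemma span_prime_split {p b : ℤ} (hsf : Squarefree d) (hp : Prime p) (hodd : ¬ (2 : ℤ) ∣ p)
    (hb : p ∣ d - b ^ 2) :
    Ideal.span {(p : Zsqrtd d)} = Qd d p b * Qd d p (-b) := by
  have hb' : p ∣ d - (-b) ^ 2 := by
    have hsq : (-b) ^ 2 = b ^ 2 := by ring
    rwa [hsq]
  apply le_antisymm
  · rw [Ideal.span_le, Set.singleton_subset_iff]
    obtain ⟨k, hk⟩ := hb
    have t4 : (⟨b, 1⟩ : Zsqrtd d) * ⟨-b, 1⟩ ∈ Qd d p b * Qd d p (-b) :=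
      Ideal.mul_mem_mul (mem_Qd_gen2 p b) (mem_Qd_gen2 p (-b))
    have t1 : (p : Zsqrtd d) * (p : Zsqrtd d) ∈ Qd d p b * Qd d p (-b) :=
      Ideal.mul_mem_mul (mem_Qd_gen1 p b) (mem_Qd_gen1 p (-b))
    by_cases hpb : p ∣ b
    · have hpk : ¬ p ∣ k := by
        intro hdvd
        have h2 : p * p ∣ d := by
          have hdk : p * p ∣ d - b * b := by
            rw [show d - b * b = d - b ^ 2 from by ring, hk]
            exact mul_dvd_mul_left p hdvd
          have h3 := dvd_add hdk (mul_dvd_mul hpb hpb)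
          simpa using h3
        exact hp.not_unit (hsf p h2)
      obtain ⟨u, w, huw⟩ := hp.coprime_iff_not_dvd.mpr hpk
      have hX : (u : Zsqrtd d) * ((p : Zsqrtd d) * (p : Zsqrtd d))
          + (w : Zsqrtd d) * ((⟨b, 1⟩ : Zsqrtd d) * ⟨-b, 1⟩)
          ∈ Qd d p b * Qd d p (-b) :=
        Submodule.add_mem _ (Ideal.mul_mem_left _ _ t1) (Ideal.mul_mem_left _ _ t4)
      have hXeq : (u : Zsqrtd d) * ((p : Zsqrtd d) * (p : Zsqrtd d))
          + (w : Zsqrtd d) * ((⟨b, 1⟩ : Zsqrtd d) * ⟨-b, 1⟩)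
          = (p : Zsqrtd d) := by
        rw [Zsqrtd.ext_iff]
        refine ⟨?_, ?_⟩
        · simp only [Zsqrtd.re_add, Zsqrtd.re_mul, Zsqrtd.im_mul,
            Zsqrtd.im_add, Zsqrtd.re_intCast, Zsqrtd.im_intCast]
          linear_combination p * huw + w * hk
        · simp only [Zsqrtd.re_add, Zsqrtd.re_mul, Zsqrtd.im_mul,
            Zsqrtd.im_add, Zsqrtd.re_intCast, Zsqrtd.im_intCast]
          ring
      rw [← hXeq]
      exact hX
    · have h2b : ¬ p ∣ 2 * b := by
        intro hdvd
        rcases hp.dvd_mul.mp hdvd with h2 | h2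
        · have hn2 : p.natAbs ∣ 2 := by
            have h3 := Int.natAbs_dvd_natAbs.mpr h2
            simpa using h3
          have hle : p.natAbs ≤ 2 := Nat.le_of_dvd (by norm_num) hn2
          have hne0 : p.natAbs ≠ 0 := fun h => hp.ne_zero (Int.natAbs_eq_zero.mp h)
          have hne1 : p.natAbs ≠ 1 := by
            intro h1'
            apply hp.not_unit
            rw [Int.isUnit_iff]
            rcases Int.natAbs_eq p with he | he <;> omega
          have hpe : p = 2 ∨ p = -2 := by
            rcases Int.natAbs_eq p with he | he <;> omega
          rcases hpe with rfl | rfl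
          · exact hodd ⟨1, rfl⟩
          · exact hodd ⟨-1, by ring⟩
        · exact hpb h2
      obtain ⟨u, w, huw⟩ := hp.coprime_iff_not_dvd.mpr h2b
      have t2 : (⟨b, 1⟩ : Zsqrtd d) * (p : Zsqrtd d) ∈ Qd d p b * Qd d p (-b) :=
        Ideal.mul_mem_mul (mem_Qd_gen2 p b) (mem_Qd_gen1 p (-b))
      have t3 : (p : Zsqrtd d) * (⟨-b, 1⟩ : Zsqrtd d) ∈ Qd d p b * Qd d p (-b) :=
        Ideal.mul_mem_mul (mem_Qd_gen1 p b) (mem_Qd_gen2 p (-b))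
      have hX : (u : Zsqrtd d) * ((p : Zsqrtd d) * (p : Zsqrtd d))
          + (w : Zsqrtd d) * ((⟨b, 1⟩ : Zsqrtd d) * (p : Zsqrtd d)
              - (p : Zsqrtd d) * (⟨-b, 1⟩ : Zsqrtd d))
          ∈ Qd d p b * Qd d p (-b) :=
        Submodule.add_mem _ (Ideal.mul_mem_left _ _ t1)
          (Ideal.mul_mem_left _ _ (Submodule.sub_mem _ t2 t3))
      have hXeq : (u : Zsqrtd d) * ((p : Zsqrtd d) * (p : Zsqrtd d))
          + (w : Zsqrtd d) * ((⟨b, 1⟩ : Zsqrtd d) * (p : Zsqrtd d)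
              - (p : Zsqrtd d) * (⟨-b, 1⟩ : Zsqrtd d))
          = (p : Zsqrtd d) := by
        rw [Zsqrtd.ext_iff]
        refine ⟨?_, ?_⟩
        · simp only [Zsqrtd.re_add, Zsqrtd.re_sub, Zsqrtd.re_mul, Zsqrtd.im_mul,
            Zsqrtd.im_add, Zsqrtd.im_sub, Zsqrtd.re_intCast, Zsqrtd.im_intCast]
          linear_combination p * huw
        · simp only [Zsqrtd.re_add, Zsqrtd.re_sub, Zsqrtd.re_mul, Zsqrtd.im_mul,
            Zsqrtd.im_add, Zsqrtd.im_sub, Zsqrtd.re_intCast, Zsqrtd.im_intCast]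
          ring
      rw [← hXeq]
      exact hX
  · rw [Ideal.mul_le]
    intro r hr s hs
    rw [mem_Qd hb] at hr
    rw [mem_Qd hb'] at hs
    rw [mem_span_int]
    obtain ⟨k1, e1⟩ := hr
    obtain ⟨k2, e2⟩ := hs
    obtain ⟨k0, e0⟩ := hb
    constructor
    · exact ⟨s.re * k1 + b * r.im * k2 + r.im * s.im * k0, by
        simp only [Zsqrtd.re_mul]
        linear_combination s.re * e1 + (b * r.im) * e2 + (r.im * s.im) * e0⟩
    · exact ⟨s.im * k1 + r.im * k2, by
        simp only [Zsqrtd.im_mul]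
        linear_combination s.im * e1 + r.im * e2⟩


/-! ### factorization predicate -/

def Good (d : ℤ) (I : Ideal (Zsqrtd d)) : Prop :=
  ∃ L : List (Ideal (Zsqrtd d)), (∀ J ∈ L, J ≠ ⊤ ∧ IsTwoAbsorbing J) ∧ I = L.prod

lemma good_top : Good d ⊤ := ⟨[], by simp, by simp [Ideal.one_eq_top]⟩

lemma good_of {I : Ideal (Zsqrtd d)} (hne : I ≠ ⊤) (h2 : IsTwoAbsorbing I) : Good d I :=
  ⟨[I], by simp [hne, h2], by simp⟩

lemma Good.mul {I J : Ideal (Zsqrtd d)} (hI : Good d I) (hJ : Good d J) : Good d (I * J) := by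
  obtain ⟨L1, h1, rfl⟩ := hI
  obtain ⟨L2, h2, rfl⟩ := hJ
  refine ⟨L1 ++ L2, ?_, (List.prod_append).symm⟩
  intro K hK
  rcases List.mem_append.mp hK with h | h
  · exact h1 K h
  · exact h2 K h

lemma good_span_prime (hsf : Squarefree d) (hd4 : d % 4 = 1) {p : ℤ} (hp : Prime p) :
    Good d (Ideal.span {(p : Zsqrtd d)}) := by
  by_cases h2 : (2 : ℤ) ∣ p
  · have hpe : p = 2 ∨ p = -2 := by
      have hn2 : p.natAbs = 2 := by
        have ha := Int.natAbs_dvd_natAbs.mpr h2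
        have h2a : (2 : ℕ) ∣ p.natAbs := ha
        have hb := Int.natAbs_dvd_natAbs.mpr (dvd_refl p)
        have hpn : p.natAbs.Prime := Int.prime_iff_natAbs_prime.mp hp
        exact ((Nat.prime_dvd_prime_iff_eq Nat.prime_two hpn).mp h2a).symm
      rcases Int.natAbs_eq p with he | he <;> omega
    have h2ne : ¬IsUnit (2 : ℤ) := by
      rw [Int.isUnit_iff]; omega
    have hgood : Good d (Ideal.span {((2 : ℤ) : Zsqrtd d)}) :=
      good_of (span_int_ne_top h2ne) (twoAbsorbing_two hd4)
    rcases hpe with rfl | rfl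
    · exact hgood
    · have : ((-2 : ℤ) : Zsqrtd d) = -((2 : ℤ) : Zsqrtd d) := by push_cast; ring
      rw [this, Ideal.span_singleton_neg]
      exact hgood
  · by_cases hroot : ∃ b : ℤ, p ∣ d - b ^ 2
    · obtain ⟨b, hb⟩ := hroot
      rw [span_prime_split hsf hp h2 hb]
      have hb' : p ∣ d - (-b) ^ 2 := by
        rw [show (-b) ^ 2 = b ^ 2 from by ring]; exact hb
      exact (good_of (Qd_ne_top hb hp.not_unit) (twoAbsorbing_Qd_prime hp hb)).mul
        (good_of (Qd_ne_top hb' hp.not_unit) (twoAbsorbing_Qd_prime hp hb'))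
    · push_neg at hroot
      have hnr : ∀ b : ℤ, ¬ p ∣ b ^ 2 - d := by
        intro b hdvd
        apply hroot b
        have h := dvd_neg.mpr hdvd
        rwa [neg_sub] at h
      exact good_of (span_int_ne_top hp.not_unit)
        (isTwoAbsorbing_of_isPrime (span_prime_isPrime hp hnr))

lemma good_span (hsf : Squarefree d) (hd4 : d % 4 = 1) :
    ∀ c : ℤ, c ≠ 0 → Good d (Ideal.span {(c : Zsqrtd d)}) := by
  intro c
  induction c using UniqueFactorizationMonoid.induction_on_prime with
  | h₁ => exact fun h => absurd rfl h
  | h₂ x hx =>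
    intro _
    have hx' : IsUnit ((x : ℤ) : Zsqrtd d) := by
      rcases Int.isUnit_iff.mp hx with rfl | rfl
      · simpa using isUnit_one
      · have : ((-1 : ℤ) : Zsqrtd d) = -1 := by push_cast; ring
        rw [this]
        exact isUnit_one.neg
    rw [Ideal.span_singleton_eq_top.mpr hx']
    exact good_top
  | h₃ a q ha hq ih =>
    intro _
    have hcast : ((q * a : ℤ) : Zsqrtd d) = (q : Zsqrtd d) * (a : Zsqrtd d) := by
      push_cast; ring
    rw [hcast, ← Ideal.span_singleton_mul_span_singleton]
    exact (good_span_prime hsf hd4 hq).mul (ih ha)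

lemma good_Qd (hsf : Squarefree d) (h58 : d % 8 = 5) :
    ∀ a : ℕ, ∀ b : ℤ, 0 < a → (a : ℤ) ∣ d - b ^ 2 → Good d (Qd d a b) := by
  intro a
  induction a using Nat.strong_induction_on with
  | _ a ih =>
    intro b ha hab
    have hd4 : d % 4 = 1 := by omega
    rcases Nat.lt_or_ge a 2 with hlt | h2le
    · have ha1 : a = 1 := by omega
      subst ha1
      have htop : Qd d ((1 : ℕ) : ℤ) b = ⊤ := by
        rw [Ideal.eq_top_iff_one, mem_Qd (by simp)]
        simp
      rw [htop]
      exact good_top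
    · have hpp' : a.minFac.Prime := Nat.minFac_prime (by omega)
      obtain ⟨m, hm⟩ := a.minFac_dvd
      obtain ⟨p, hpdef⟩ : ∃ p, a.minFac = p := ⟨_, rfl⟩
      rw [hpdef] at hm
      have hpp : p.Prime := hpdef ▸ hpp'

      have hm0 : 0 < m := by
        rcases Nat.eq_zero_or_pos m with h | h
        · subst h; omega
        · exact h
      have hp2le : 2 ≤ p := hpp.two_le
      have hmlt : m < a := by nlinarith
      have hpz : Prime (p : ℤ) := Int.prime_iff_natAbs_prime.mpr (by simpa using hpp)
      have hmdvda : m ∣ a := ⟨p, by rw [hm]; ring⟩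
      have hmdvd : (m : ℤ) ∣ d - b ^ 2 :=
        dvd_trans (Int.natCast_dvd_natCast.mpr hmdvda) hab
      have hpdvdz : (p : ℤ) ∣ d - b ^ 2 :=
        dvd_trans (Int.natCast_dvd_natCast.mpr ⟨m, hm⟩) hab
      by_cases hcase : p = 2 ∧ 2 ∣ m
      · obtain ⟨hp2, hm2⟩ := hcase
        obtain ⟨m', hm'⟩ := hm2
        have ha4 : a = 4 * m' := by
          subst hp2; omega
        have hm'0 : 0 < m' := by omega
        have h4a : (4 : ℤ) ∣ (a : ℤ) := by
          exact_mod_cast Int.natCast_dvd_natCast.mpr ⟨m', ha4⟩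
        have h4ab : (4 : ℤ) ∣ d - b ^ 2 := h4a.trans hab
        have hbodd : ¬ (2 : ℤ) ∣ b := by
          rintro ⟨t, ht⟩
          obtain ⟨k, hk⟩ := h4ab
          have hd' : d = 4 * k + 4 * t ^ 2 := by linear_combination hk + (b + 2 * t) * ht
          obtain ⟨s, hs⟩ : ∃ s, t ^ 2 = s := ⟨_, rfl⟩
          rw [hs] at hd'
          omega
        have h2m' : ¬ 2 ∣ m' := by
          rintro ⟨t, ht⟩
          have h8a : (8 : ℤ) ∣ (a : ℤ) := by
            exact_mod_cast Int.natCast_dvd_natCast.mpr ⟨t, by omega⟩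
          have h8ab : (8 : ℤ) ∣ d - b ^ 2 := h8a.trans hab
          obtain ⟨e, he⟩ : ∃ e, b = 2 * e + 1 := ⟨b / 2, by omega⟩
          obtain ⟨f, hf⟩ := Int.even_mul_succ_self e
          obtain ⟨k, hk⟩ := h8ab
          have hd' : d = 8 * k + 8 * f + 1 := by
            linear_combination hk + (b + 2 * e + 1) * he + 4 * hf
          omega
        have hco : IsCoprime (4 : ℤ) (m' : ℤ) := by
          have h2mz : ¬ (2 : ℤ) ∣ (m' : ℤ) := fun h => h2m' (by exact_mod_cast h)
          have hc2 : IsCoprime (2 : ℤ) (m' : ℤ) := Int.prime_two.coprime_iff_not_dvd.mpr h2mz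
          have h4 : IsCoprime ((2 : ℤ) ^ 2) (m' : ℤ) := hc2.pow_left
          rwa [show (2 : ℤ) ^ 2 = 4 from by norm_num] at h4
        obtain ⟨u, v, huv⟩ := hco
        have hmn : (4 : ℤ) * (m' : ℤ) ∣ d - b ^ 2 := by
          rw [show (4 : ℤ) * (m' : ℤ) = (a : ℤ) from by exact_mod_cast ha4.symm]
          exact hab
        have hglue := Qd_mul_Qd hmn ⟨u, v, 0, by linarith⟩
        rw [show ((a : ℕ) : ℤ) = (4 : ℤ) * (m' : ℤ) from by exact_mod_cast ha4, ← hglue]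
        have h4d : (2 : ℤ) ^ 2 ∣ d - b ^ 2 := by
          rwa [show (2 : ℤ) ^ 2 = 4 from by norm_num]
        have h4top : Qd d 4 b ≠ ⊤ := by
          apply Qd_ne_top h4ab
          rw [Int.isUnit_iff]; omega
        have h4two : IsTwoAbsorbing (Qd d 4 b) := by
          have := twoAbsorbing_Qd_prime_sq Int.prime_two h4d
          rwa [show (2 : ℤ) ^ 2 = 4 from by norm_num] at this
        refine (good_of h4top h4two).mul (ih m' ?_ b hm'0 ?_)
        · omega
        · exact dvd_trans (Int.natCast_dvd_natCast.mpr ⟨4, by omega⟩) hab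
      · have hcop : ∃ u v w : ℤ, u * p + v * m + w * (2 * b) = 1 := by
          by_cases hpb : (p : ℤ) ∣ 2 * b
          · have hpm : ¬ p ∣ m := by
              intro hpm
              by_cases hp2 : p = 2
              · exact hcase ⟨hp2, hp2 ▸ hpm⟩
              · have hpbz : (p : ℤ) ∣ b := by
                  rcases hpz.dvd_mul.mp hpb with h | h
                  · exfalso
                    apply hp2
                    have : p ∣ 2 := Int.natCast_dvd_natCast.mp (by exact_mod_cast h)
                    exact (Nat.prime_dvd_prime_iff_eq hpp Nat.prime_two).mp this
                  · exact h
                have hppa : (p : ℤ) * (p : ℤ) ∣ (a : ℤ) := by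
                  obtain ⟨t, ht⟩ := hpm
                  exact_mod_cast Int.natCast_dvd_natCast.mpr ⟨t, by rw [hm, ht]; ring⟩
                have hsq : (p : ℤ) * (p : ℤ) ∣ d := by
                  have h3 := dvd_add (hppa.trans hab) (mul_dvd_mul hpbz hpbz)
                  have h4 : d - b ^ 2 + b * b = d := by ring
                  rwa [h4] at h3
                exact hpz.not_unit (hsf _ hsq)
            obtain ⟨u, v, huv⟩ := hpz.coprime_iff_not_dvd.mpr
              (fun h => hpm (Int.natCast_dvd_natCast.mp h))
            exact ⟨u, v, 0, by linarith⟩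
          · obtain ⟨u, w, huw⟩ := hpz.coprime_iff_not_dvd.mpr hpb
            exact ⟨u, 0, w, by linarith⟩
        have hmn : (p : ℤ) * (m : ℤ) ∣ d - b ^ 2 := by
          rw [show (p : ℤ) * (m : ℤ) = (a : ℤ) from by exact_mod_cast hm.symm]
          exact hab
        have hglue := Qd_mul_Qd hmn hcop
        rw [show ((a : ℕ) : ℤ) = (p : ℤ) * (m : ℤ) from by exact_mod_cast hm, ← hglue]
        exact (good_of (Qd_ne_top hpdvdz hpz.not_unit)
          (twoAbsorbing_Qd_prime hpz hpdvdz)).mul (ih m hmlt b hm0 hmdvd)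



/-! ### nondegeneracy -/

lemma nonsquare (hsf : Squarefree d) (h0 : d ≠ 0) (h1 : d ≠ 1) : ∀ n : ℤ, d ≠ n * n := by
  intro n hn
  have hu : IsUnit n := hsf n (hn ▸ dvd_refl d)
  rcases Int.isUnit_iff.mp hu with rfl | rfl
  · norm_num at hn; exact h1 hn
  · norm_num at hn; exact h1 hn

lemma eq_zero_or (hns : ∀ n : ℤ, d ≠ n * n) {z w : Zsqrtd d} (h : z * w = 0) :
    z = 0 ∨ w = 0 := by
  by_contra hc
  push_neg at hc
  have h1 : Zsqrtd.norm z ≠ 0 := fun hh => hc.1 ((Zsqrtd.norm_eq_zero hns z).mp hh)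
  have h2 : Zsqrtd.norm w ≠ 0 := fun hh => hc.2 ((Zsqrtd.norm_eq_zero hns w).mp hh)
  have h3 : Zsqrtd.norm z * Zsqrtd.norm w = 0 := by
    rw [← Zsqrtd.norm_mul, h, Zsqrtd.norm_zero]
  rcases mul_eq_zero.mp h3 with hh | hh
  · exact h1 hh
  · exact h2 hh

lemma twoAbsorbing_bot (hns : ∀ n : ℤ, d ≠ n * n) :
    IsTwoAbsorbing (⊥ : Ideal (Zsqrtd d)) := by
  intro x y z h
  rw [Ideal.mem_bot] at h
  rcases eq_zero_or hns h with h1 | h1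
  · exact Or.inl (by rw [Ideal.mem_bot]; exact h1)
  · exact Or.inr (Or.inl (by rw [Ideal.mem_bot, h1, mul_zero]))

/-! ### structure helpers -/

lemma mk_add (x₁ y₁ x₂ y₂ : ℤ) :
    (⟨x₁, y₁⟩ : Zsqrtd d) + ⟨x₂, y₂⟩ = ⟨x₁ + x₂, y₁ + y₂⟩ := rfl

lemma mk_zero : (⟨0, 0⟩ : Zsqrtd d) = 0 := rfl

lemma int_mul_mk (c x y : ℤ) : (c : Zsqrtd d) * ⟨x, y⟩ = ⟨c * x, c * y⟩ := by
  rw [Zsqrtd.ext_iff]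
  constructor <;> simp [Zsqrtd.re_mul, Zsqrtd.im_mul]

lemma mk_mul_sqrtd (x y : ℤ) : (⟨x, y⟩ : Zsqrtd d) * ⟨0, 1⟩ = ⟨d * y, x⟩ := by
  rw [Zsqrtd.ext_iff]
  constructor <;> simp [Zsqrtd.re_mul, Zsqrtd.im_mul]

lemma intCast_mk (n : ℤ) : ((n : ℤ) : Zsqrtd d) = ⟨n, 0⟩ := by
  rw [Zsqrtd.ext_iff]
  constructor <;> simp

/-- The ideal of imaginary parts. -/
def imId (I : Ideal (Zsqrtd d)) : Ideal ℤ where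
  carrier := {y | ∃ x, (⟨x, y⟩ : Zsqrtd d) ∈ I}
  zero_mem' := ⟨0, by rw [mk_zero]; exact I.zero_mem⟩
  add_mem' := by
    rintro y₁ y₂ ⟨x₁, h₁⟩ ⟨x₂, h₂⟩
    exact ⟨x₁ + x₂, by rw [← mk_add]; exact I.add_mem h₁ h₂⟩
  smul_mem' := by
    rintro c y ⟨x, h⟩
    refine ⟨c * x, ?_⟩
    simp only [smul_eq_mul]
    have h2 := I.mul_mem_left (c : Zsqrtd d) h
    rwa [int_mul_mk] at h2

/-- The ideal of rational integers in `I`. -/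
def reId (I : Ideal (Zsqrtd d)) : Ideal ℤ where
  carrier := {x | (⟨x, 0⟩ : Zsqrtd d) ∈ I}
  zero_mem' := by
    show (⟨0, 0⟩ : Zsqrtd d) ∈ I
    rw [mk_zero]; exact I.zero_mem
  add_mem' := by
    intro x₁ x₂ h₁ h₂
    have h3 := I.add_mem h₁ h₂
    rwa [mk_add, add_zero] at h3
  smul_mem' := by
    intro c x h
    simp only [smul_eq_mul]
    show (⟨c * x, 0⟩ : Zsqrtd d) ∈ I
    have h2 := I.mul_mem_left (c : Zsqrtd d) h
    rwa [int_mul_mk, mul_zero] at h2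

lemma Qd_neg (a b : ℤ) : Qd d (-a) b = Qd d a b := by
  unfold Qd
  apply le_antisymm
  · rw [Ideal.span_le]
    rintro g hg
    rcases Set.mem_insert_iff.mp hg with rfl | hg
    · have h : ((-a : ℤ) : Zsqrtd d) = -((a : ℤ) : Zsqrtd d) := by push_cast; ring
      rw [h]
      exact Submodule.neg_mem _ (Ideal.subset_span (Set.mem_insert _ _))
    · exact Ideal.subset_span (Set.mem_insert_of_mem _ hg)
  · rw [Ideal.span_le]
    rintro g hg
    rcases Set.mem_insert_iff.mp hg with rfl | hg
    · have h : ((a : ℤ) : Zsqrtd d) = -((-a : ℤ) : Zsqrtd d) := by push_cast; ring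
      rw [h]
      exact Submodule.neg_mem _ (Ideal.subset_span (Set.mem_insert _ _))
    · exact Ideal.subset_span (Set.mem_insert_of_mem _ hg)

/-! ### normal form -/

lemma exists_nf (hns : ∀ n : ℤ, d ≠ n * n) {I : Ideal (Zsqrtd d)} (hbot : I ≠ ⊥) :
    ∃ c a b : ℤ, c ≠ 0 ∧ 0 < a ∧ a ∣ d - b ^ 2 ∧
      I = Ideal.span {(c : Zsqrtd d)} * Qd d a b := by
  obtain ⟨z₀, hz₀I, hz₀⟩ := Submodule.exists_mem_ne_zero_of_ne_bot hbot
  have hNmem : ((Zsqrtd.norm z₀ : ℤ) : Zsqrtd d) ∈ I := by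
    have h2 := I.mul_mem_right (star z₀) hz₀I
    rwa [← Zsqrtd.norm_eq_mul_conj] at h2
  have hN0 : Zsqrtd.norm z₀ ≠ 0 := fun h => hz₀ ((Zsqrtd.norm_eq_zero hns z₀).mp h)
  obtain ⟨c₀, hc₀⟩ := Submodule.IsPrincipal.principal (imId I)
  obtain ⟨A₀, hA₀⟩ := Submodule.IsPrincipal.principal (reId I)
  have hXmem : ∀ x : ℤ, x ∈ reId I ↔ A₀ ∣ x := by
    intro x; rw [hA₀]; exact Ideal.mem_span_singleton
  have hYmem : ∀ y : ℤ, y ∈ imId I ↔ c₀ ∣ y := by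
    intro y; rw [hc₀]; exact Ideal.mem_span_singleton
  have hNX : Zsqrtd.norm z₀ ∈ reId I := by
    show (⟨Zsqrtd.norm z₀, 0⟩ : Zsqrtd d) ∈ I
    rwa [← intCast_mk]
  have hA0ne : A₀ ≠ 0 := by
    intro h
    have h2 := (hXmem _).mp hNX
    rw [h] at h2
    exact hN0 (zero_dvd_iff.mp h2)
  have hA0X : (⟨A₀, 0⟩ : Zsqrtd d) ∈ I := (hXmem A₀).mpr dvd_rfl
  have hA0Y : c₀ ∣ A₀ := by
    rw [← hYmem]
    refine ⟨0, ?_⟩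
    have h2 := I.mul_mem_right ⟨0, 1⟩ hA0X
    rwa [mk_mul_sqrtd, mul_zero] at h2
  have hc0ne : c₀ ≠ 0 := by
    rintro rfl
    exact hA0ne (zero_dvd_iff.mp hA0Y)
  obtain ⟨xw, hw0⟩ : ∃ x, (⟨x, c₀⟩ : Zsqrtd d) ∈ I := (hYmem c₀).mpr dvd_rfl
  have hcxw : c₀ ∣ xw := by
    rw [← hYmem]
    refine ⟨d * c₀, ?_⟩
    have h2 := I.mul_mem_right ⟨0, 1⟩ hw0
    rwa [mk_mul_sqrtd] at h2
  obtain ⟨b, hb⟩ := hcxw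
  rw [hb] at hw0
  obtain ⟨a, ha⟩ := hA0Y
  have hane : a ≠ 0 := by
    rintro rfl
    rw [mul_zero] at ha
    exact hA0ne ha
  -- a ∣ d - b²
  have hkey : (⟨c₀ * (d - b * b), 0⟩ : Zsqrtd d) ∈ I := by
    have h2 := I.mul_mem_right ⟨0, 1⟩ hw0
    rw [mk_mul_sqrtd] at h2
    have h3 := I.mul_mem_left (b : Zsqrtd d) hw0
    rw [int_mul_mk] at h3
    have h4 := Submodule.sub_mem _ h2 h3
    rwa [show (⟨d * c₀, c₀ * b⟩ : Zsqrtd d) - ⟨b * (c₀ * b), b * c₀⟩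
        = ⟨c₀ * (d - b * b), 0⟩ from by
      rw [Zsqrtd.ext_iff]; constructor <;> simp <;> ring] at h4
  have hadvd : a ∣ d - b ^ 2 := by
    have hXk : A₀ ∣ c₀ * (d - b * b) := (hXmem _).mp hkey
    rw [ha] at hXk
    have h5 := (mul_dvd_mul_iff_left hc0ne).mp hXk
    rwa [show d - b * b = d - b ^ 2 from by ring] at h5
  -- the product identity
  have hprod : I = Ideal.span {(c₀ : Zsqrtd d)} * Qd d a b := by
    apply le_antisymm
    · intro z hz
      have hcim : c₀ ∣ z.im := (hYmem z.im).mp ⟨z.re, hz⟩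
      obtain ⟨t, ht⟩ := hcim
      have hz2 : z - (t : Zsqrtd d) * ⟨c₀ * b, c₀⟩ ∈ I :=
        Submodule.sub_mem _ hz (I.mul_mem_left _ hw0)
      rw [int_mul_mk] at hz2
      have he : z - (⟨t * (c₀ * b), t * c₀⟩ : Zsqrtd d) = ⟨z.re - t * (c₀ * b), 0⟩ := by
        rw [Zsqrtd.ext_iff]
        constructor
        · simp
        · simp only [Zsqrtd.im_sub]
          linarith [ht]
      rw [he] at hz2
      obtain ⟨s, hs⟩ := (hXmem _).mp hz2
      have hzeq : z = (c₀ : Zsqrtd d)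
          * ((s : Zsqrtd d) * (a : Zsqrtd d) + (t : Zsqrtd d) * ⟨b, 1⟩) := by
        rw [Zsqrtd.ext_iff]
        constructor
        · simp only [Zsqrtd.re_mul, Zsqrtd.im_mul, Zsqrtd.re_add, Zsqrtd.im_add,
            Zsqrtd.re_intCast, Zsqrtd.im_intCast]
          rw [ha] at hs
          linear_combination hs
        · simp only [Zsqrtd.re_mul, Zsqrtd.im_mul, Zsqrtd.re_add, Zsqrtd.im_add,
            Zsqrtd.re_intCast, Zsqrtd.im_intCast]
          ring_nf
          linarith [ht]
      rw [hzeq]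
      exact Ideal.mul_mem_mul (Ideal.mem_span_singleton_self _)
        (Submodule.add_mem _ (Ideal.mul_mem_left _ _ (mem_Qd_gen1 a b))
          (Ideal.mul_mem_left _ _ (mem_Qd_gen2 a b)))
    · rw [Ideal.mul_le]
      intro r hr s hs
      obtain ⟨ρ, hρ⟩ := Ideal.mem_span_singleton.mp hr
      obtain ⟨α, β, hαβ⟩ := Ideal.mem_span_pair.mp hs
      have hrs : r * s = (ρ * α) * ((c₀ * a : ℤ) : Zsqrtd d)
          + (ρ * β) * ((c₀ : Zsqrtd d) * ⟨b, 1⟩) := by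
        rw [hρ, ← hαβ]
        push_cast
        ring
      rw [hrs, int_mul_mk]
      simp only [mul_one]
      have hca : ((c₀ * a : ℤ) : Zsqrtd d) ∈ I := by
        rw [← ha, intCast_mk]
        exact hA0X
      exact I.add_mem (I.mul_mem_left _ hca) (I.mul_mem_left _ hw0)
  rcases lt_or_gt_of_ne hane with hneg | hpos
  · refine ⟨c₀, -a, b, hc0ne, by omega, (neg_dvd).mpr hadvd, ?_⟩
    rw [Qd_neg]
    exact hprod
  · exact ⟨c₀, a, b, hc0ne, hpos, hadvd, hprod⟩

/-! ### the backward direction -/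

lemma good_of_ne_bot (hsf : Squarefree d) (h0 : d ≠ 0) (h1 : d ≠ 1) (h58 : d % 8 = 5)
    {I : Ideal (Zsqrtd d)} (hbot : I ≠ ⊥) : Good d I := by
  have hd4 : d % 4 = 1 := by omega
  have hns := nonsquare hsf h0 h1
  obtain ⟨c, a, b, hc, ha, hab, rfl⟩ := exists_nf hns hbot
  refine (good_span hsf hd4 c hc).mul ?_
  have h1' : ((a.toNat : ℕ) : ℤ) = a := Int.toNat_of_nonneg ha.le
  rw [← h1']
  exact good_Qd hsf h58 a.toNat b (by omega) (by rw [h1']; exact hab)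

lemma backward (hsf : Squarefree d) (h0 : d ≠ 0) (h1 : d ≠ 1) (h58 : d % 8 = 5) :
    IsTAFRing (Zsqrtd d) := by
  intro I hItop
  have hns := nonsquare hsf h0 h1
  by_cases hbot : I = ⊥
  · subst hbot
    have hbt : (⊥ : Ideal (Zsqrtd d)) ≠ ⊤ := by
      intro h
      have h2 : (1 : Zsqrtd d) ∈ (⊥ : Ideal (Zsqrtd d)) := by
        rw [h]; exact Submodule.mem_top
      rw [Ideal.mem_bot] at h2
      exact one_ne_zero h2
    exact ⟨1, fun _ => ⊥, fun i => ⟨hbt, twoAbsorbing_bot hns⟩, by simp⟩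
  · obtain ⟨L, hL, hprod⟩ := good_of_ne_bot hsf h0 h1 h58 hbot
    refine ⟨L.length, L.get, fun i => hL _ (L.get_mem i), ?_⟩
    rw [hprod]
    conv_lhs => rw [← List.ofFn_get L]
    exact List.prod_ofFn

/-! ### the forward direction -/

lemma forward (h4 : d % 4 = 1) (h8 : d % 8 = 1) (htaf : IsTAFRing (Zsqrtd d)) : False := by
  have h81 : (8 : ℤ) ∣ d - 1 ^ 2 := by
    have he : d - 1 ^ 2 = d - 1 := by ring
    rw [he]; omega
  have hWne : Qd d 8 1 ≠ ⊤ := Qd_ne_top h81 (by rw [Int.isUnit_iff]; omega)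
  obtain ⟨n, J, hJ, hW⟩ := htaf _ hWne
  have hle : ∀ i, Qd d 8 1 ≤ J i := by
    intro i
    calc Qd d 8 1 = ∏ j, J j := hW
    _ ≤ Finset.univ.inf J := Ideal.prod_le_inf
    _ ≤ J i := Finset.inf_le (Finset.mem_univ i)
  have h11W : (⟨1, 1⟩ : Zsqrtd d) ∈ Qd d 8 1 := by
    rw [mem_Qd h81]
    show (8 : ℤ) ∣ 1 - 1 * 1
    norm_num
  have h8W : ((8 : ℤ) : Zsqrtd d) ∈ Qd d 8 1 := by
    rw [mem_Qd h81]
    simp [Zsqrtd.re_intCast, Zsqrtd.im_intCast]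
  have heven : ∀ i, ∀ z ∈ J i, 2 ∣ z.re - z.im := by
    intro i z hz
    by_contra hodd
    have hq : (⟨z.re - z.im, 0⟩ : Zsqrtd d) ∈ J i := by
      have h2 := Submodule.sub_mem _ hz
        (Ideal.mul_mem_left _ (z.im : Zsqrtd d) (hle i h11W))
      rwa [int_mul_mk, show z - (⟨z.im * 1, z.im * 1⟩ : Zsqrtd d)
          = ⟨z.re - z.im, 0⟩ from by
        rw [Zsqrtd.ext_iff]; constructor <;> simp] at h2
    obtain ⟨k, hk⟩ : ∃ k, z.re - z.im = 2 * k + 1 := ⟨(z.re - z.im) / 2, by omega⟩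
    obtain ⟨j, hj⟩ := Int.even_mul_succ_self k
    have hone : (1 : Zsqrtd d) ∈ J i := by
      have hsq : ((z.re - z.im : ℤ) : Zsqrtd d) * ⟨z.re - z.im, 0⟩
          - (j : Zsqrtd d) * ((8 : ℤ) : Zsqrtd d) = 1 := by
        rw [Zsqrtd.ext_iff]
        constructor
        · simp only [Zsqrtd.re_sub, Zsqrtd.re_mul, Zsqrtd.im_mul, Zsqrtd.re_intCast,
            Zsqrtd.im_intCast, Zsqrtd.re_one, mul_zero, zero_mul, add_zero, mul_one, sub_zero]
          linear_combination (2 * k + 1 + (z.re - z.im)) * hk + 4 * hj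
        · simp only [Zsqrtd.im_sub, Zsqrtd.im_mul, Zsqrtd.re_mul, Zsqrtd.re_intCast,
            Zsqrtd.im_intCast, Zsqrtd.im_one, mul_zero, zero_mul, add_zero, mul_one, sub_zero]
      rw [← hsq]
      exact Submodule.sub_mem _ (Ideal.mul_mem_left _ _ hq)
        (Ideal.mul_mem_left _ _ (hle i h8W))
    exact (hJ i).1 ((Ideal.eq_top_iff_one _).mpr hone)
  rcases n with _ | n
  · apply hWne
    rw [hW]
    simp [Ideal.one_eq_top]
  rcases n with _ | n
  · have h2AF := (hJ 0).2
    have hWeq : Qd d 8 1 = J 0 := by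
      rw [hW]
      simp
    have h8mem : ((2 : ℤ) : Zsqrtd d) * ((2 : ℤ) : Zsqrtd d) * ((2 : ℤ) : Zsqrtd d)
        ∈ Qd d 8 1 := by
      rw [show ((2 : ℤ) : Zsqrtd d) * ((2 : ℤ) : Zsqrtd d) * ((2 : ℤ) : Zsqrtd d)
          = ((8 : ℤ) : Zsqrtd d) from by push_cast; ring]
      exact h8W
    rw [hWeq] at h8mem
    have hpair := h2AF _ _ _ h8mem
    have h4mem : ((2 : ℤ) : Zsqrtd d) * ((2 : ℤ) : Zsqrtd d) ∈ J 0 := by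
      rcases hpair with h | h | h <;> exact h
    rw [← hWeq] at h4mem
    rw [show ((2 : ℤ) : Zsqrtd d) * ((2 : ℤ) : Zsqrtd d) = ((4 : ℤ) : Zsqrtd d) from by
      push_cast; ring] at h4mem
    rw [mem_Qd h81] at h4mem
    simp only [Zsqrtd.re_intCast, Zsqrtd.im_intCast, mul_zero, sub_zero] at h4mem
    omega
  · -- n + 2 factors
    have h1mem : (1 : Fin (n + 2)) ∈ Finset.univ.erase (0 : Fin (n + 2)) := by
      rw [Finset.mem_erase]
      exact ⟨Fin.ne_of_val_ne (by simp), Finset.mem_univ _⟩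
    have hle01 : Qd d 8 1 ≤ J 0 * J 1 := by
      rw [hW, ← Finset.mul_prod_erase Finset.univ J (Finset.mem_univ (0 : Fin (n + 2)))]
      have h2 : Finset.prod (Finset.univ.erase (0 : Fin (n + 2))) J ≤ J 1 :=
        le_trans Ideal.prod_le_inf (Finset.inf_le h1mem)
      exact Ideal.mul_mono_right h2
    have hsub : J 0 * J 1 ≤ Ideal.span {((2 : ℤ) : Zsqrtd d)} := by
      rw [Ideal.mul_le]
      intro r hr s hs
      have h1 := heven 0 r hr
      have h2 := heven 1 s hs
      exact u_mul_even h4 (by omega) (by omega)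
    have h11 : (⟨1, 1⟩ : Zsqrtd d) ∈ Ideal.span {((2 : ℤ) : Zsqrtd d)} :=
      hsub (hle01 h11W)
    rw [mem_span_int] at h11
    have h12 : (2 : ℤ) ∣ 1 := h11.1
    omega

end ZTAF

theorem Zsqrtd_TAF_iff (d : ℤ) (hsf : Squarefree d) (h0 : d ≠ 0) (h1 : d ≠ 1)
    (h4 : d % 4 = 1) : IsTAFRing (Zsqrtd d) ↔ d % 8 = 5 := by
  constructor
  · intro htaf
    by_contra h5
    have h8 : d % 8 = 1 := by omega
    exact ZTAF.forward h4 h8 htaf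
  · intro h5
    exact ZTAF.backward hsf h0 h1 h5
end
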